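/- Let n ≥ 1 and let S be a nonempty set of positive integers. Then in ℂ[X] one has ∏_{d ∣ n} Φ_{D,S,d}(X) = ∏_{d ∣ n, n/d ∈ S} (X^d − 1), where on the left the product runs over all positive divisors d of n, and on the right over those divisors d of n with n/d ∈ S. -/

import Mathlib

open Complex Polynomial Finset

/-- The generalized cyclotomic polynomial `Φ_{D,S,n}(X) = ∏_{1 ≤ j ≤ n, gcd(j,n) ∈ S} (X − ζ_n^j)`. -/
noncomputable def genCyc (S : Set ℕ) [DecidablePred (· ∈ S)] (n : ℕ) : Polynomial ℂ :=
  ∏ j ∈ (Finset.Icc 1 n).filter (fun j => Nat.gcd j n ∈ S),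
    (X - C (Complex.exp (2 * Real.pi * Complex.I / n) ^ j))

/-- `(m/e) * (e/h) = m/h` when `h ∣ e ∣ m`. -/
lemma div_mul_div_aux {m e h : ℕ} (hem : e ∣ m) (hhe : h ∣ e) (he : 0 < e) :
    m / e * (e / h) = m / h := by
  rw [Nat.div_mul_div_comm hem hhe, mul_comm m e, Nat.mul_div_mul_left _ _ he]

/-- the gcd computation for the involution. -/
lemma gcd_aux {m e i : ℕ} (hem : e ∣ m) (_hm : m ≠ 0) (hi1 : 1 ≤ i) (hie : i ≤ e) :
    Nat.gcd (i / Nat.gcd i e * (m / e)) (m / Nat.gcd i e) = m / e := by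
  set h := Nat.gcd i e with hh
  have hpos : 0 < h := Nat.gcd_pos_of_pos_left e hi1
  have he : 0 < e := lt_of_lt_of_le hi1 hie
  have hK : m / e * (e / h) = m / h := div_mul_div_aux hem (Nat.gcd_dvd_right i e) he
  rw [← hK, mul_comm (i / h) (m / e), Nat.gcd_mul_left,
    Nat.Coprime.gcd_eq_one (Nat.coprime_div_gcd_div_gcd hpos), mul_one]

/-- `X^d - 1` as a product of linear factors over `Icc 1 d`. -/
lemma X_pow_sub_one_eq (d : ℕ) (hd : 0 < d) :
    (X ^ d - 1 : Polynomial ℂ) =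
      ∏ k ∈ Finset.Icc 1 d, (X - C (Complex.exp (2 * Real.pi * Complex.I / d) ^ k)) := by
  have hζ := Complex.isPrimitiveRoot_exp d hd.ne'
  have h := X_pow_sub_C_eq_prod hζ hd (one_pow d)
  simp only [mul_one, map_one] at h
  rw [h]
  have h1 : Finset.range d = insert 0 (Finset.Ico 1 d) := by
    ext x; simp [Finset.mem_range, Finset.mem_Ico]; omega
  have h2 : Finset.Icc 1 d = insert d (Finset.Ico 1 d) := by
    ext x; simp [Finset.mem_Icc, Finset.mem_Ico]; omega
  rw [h1, h2, Finset.prod_insert (by simp), Finset.prod_insert (by simp)]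
  rw [pow_zero, hζ.pow_eq_one]

/-- the cross-multiplied exponent equality. -/
lemma cross_aux {m e i : ℕ} (hem : e ∣ m) (hi : Nat.gcd i e ∣ i) :
    i * (m / Nat.gcd i e) = i / Nat.gcd i e * (m / e) * e := by
  set h := Nat.gcd i e
  have hhm : h ∣ m := dvd_trans (Nat.gcd_dvd_right i e) hem
  rw [mul_assoc, Nat.div_mul_cancel hem, ← Nat.mul_div_assoc i hhm,
    mul_comm (i / h) m, ← Nat.mul_div_assoc m hi, mul_comm m i]

lemma exp_eq_aux {d d' j k : ℕ} (hd : d ≠ 0) (hd' : d' ≠ 0) (h : j * d' = k * d) :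
    Complex.exp (2 * Real.pi * Complex.I / d) ^ j
      = Complex.exp (2 * Real.pi * Complex.I / d') ^ k := by
  rw [← Complex.exp_nat_mul, ← Complex.exp_nat_mul]
  congr 1
  have hdc : (d : ℂ) ≠ 0 := Nat.cast_ne_zero.mpr hd
  have hdc' : (d' : ℂ) ≠ 0 := Nat.cast_ne_zero.mpr hd'
  have hh : (j : ℂ) * d' = (k : ℂ) * d := by exact_mod_cast congrArg (Nat.cast (R := ℂ)) h
  field_simp
  ring_nf
  ring_nf at hh
  linear_combination hh

theorem stmt2 (S : Set ℕ) [DecidablePred (· ∈ S)] (hS : S.Nonempty)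
    (hSpos : ∀ m ∈ S, 1 ≤ m) (n : ℕ) (hn : 1 ≤ n) :
    ∏ d ∈ n.divisors, genCyc S d =
      ∏ d ∈ n.divisors.filter (fun d => n / d ∈ S), (X ^ d - 1 : Polynomial ℂ) := by
  have hn0 : n ≠ 0 := by omega
  unfold genCyc
  rw [Finset.prod_congr rfl (fun d hd => X_pow_sub_one_eq d (Nat.pos_of_mem_divisors
    (Finset.mem_filter.mp hd).1))]
  rw [Finset.prod_sigma', Finset.prod_sigma']
  refine Finset.prod_nbij'
    (fun p => ⟨n / Nat.gcd p.2 p.1, p.2 / Nat.gcd p.2 p.1 * (n / p.1)⟩)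
    (fun p => ⟨n / Nat.gcd p.2 p.1, p.2 / Nat.gcd p.2 p.1 * (n / p.1)⟩)
    ?_ ?_ ?_ ?_ ?_
  · rintro ⟨d, j⟩ hp
    simp only [Finset.mem_sigma, Nat.mem_divisors, Finset.mem_filter, Finset.mem_Icc] at hp ⊢
    obtain ⟨⟨hdn, -⟩, ⟨hj1, hjd⟩, hgS⟩ := hp
    set g := Nat.gcd j d with hg
    have hgd : g ∣ d := Nat.gcd_dvd_right j d
    have hgj : g ∣ j := Nat.gcd_dvd_left j d
    have hgn : g ∣ n := dvd_trans hgd hdn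
    have hgpos : 0 < g := Nat.gcd_pos_of_pos_left d hj1
    have hdpos : 0 < d := lt_of_lt_of_le hj1 hjd
    have hK : n / d * (d / g) = n / g := div_mul_div_aux hdn hgd hdpos
    refine ⟨⟨⟨Nat.div_dvd_of_dvd hgn, hn0⟩, ?_⟩, ?_, ?_⟩
    · rwa [Nat.div_div_self hgn hn0]
    · have h1 : 1 ≤ j / g := (Nat.one_le_div_iff hgpos).mpr (Nat.le_of_dvd hj1 hgj)
      have h2 : 1 ≤ n / d := (Nat.one_le_div_iff hdpos).mpr (Nat.le_of_dvd (by omega) hdn)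
      exact Nat.one_le_iff_ne_zero.mpr (by positivity)
    · calc j / g * (n / d) ≤ d / g * (n / d) :=
            Nat.mul_le_mul_right _ (Nat.div_le_div_right hjd)
        _ = n / g := by rw [mul_comm]; exact hK
  · rintro ⟨d, k⟩ hp
    simp only [Finset.mem_sigma, Nat.mem_divisors, Finset.mem_filter, Finset.mem_Icc] at hp ⊢
    obtain ⟨⟨⟨hdn, -⟩, hndS⟩, hk1, hkd⟩ := hp
    set h := Nat.gcd k d with hh
    have hhd : h ∣ d := Nat.gcd_dvd_right k d
    have hhk : h ∣ k := Nat.gcd_dvd_left k d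
    have hhn : h ∣ n := dvd_trans hhd hdn
    have hhpos : 0 < h := Nat.gcd_pos_of_pos_left d hk1
    have hdpos : 0 < d := lt_of_lt_of_le hk1 hkd
    have hK : n / d * (d / h) = n / h := div_mul_div_aux hdn hhd hdpos
    refine ⟨⟨Nat.div_dvd_of_dvd hhn, hn0⟩, ⟨?_, ?_⟩, ?_⟩
    · have h1 : 1 ≤ k / h := (Nat.one_le_div_iff hhpos).mpr (Nat.le_of_dvd hk1 hhk)
      have h2 : 1 ≤ n / d := (Nat.one_le_div_iff hdpos).mpr (Nat.le_of_dvd (by omega) hdn)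
      exact Nat.one_le_iff_ne_zero.mpr (by positivity)
    · calc k / h * (n / d) ≤ d / h * (n / d) :=
            Nat.mul_le_mul_right _ (Nat.div_le_div_right hkd)
        _ = n / h := by rw [mul_comm]; exact hK
    · rw [gcd_aux hdn hn0 hk1 hkd]; exact hndS
  · rintro ⟨d, j⟩ hp
    simp only [Finset.mem_sigma, Nat.mem_divisors, Finset.mem_filter, Finset.mem_Icc] at hp
    obtain ⟨⟨hdn, -⟩, ⟨hj1, hjd⟩, hgS⟩ := hp
    set g := Nat.gcd j d with hg
    have hgd : g ∣ d := Nat.gcd_dvd_right j d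
    have hgj : g ∣ j := Nat.gcd_dvd_left j d
    have hgn : g ∣ n := dvd_trans hgd hdn
    have hgpos : 0 < g := Nat.gcd_pos_of_pos_left d hj1
    have hdpos : 0 < d := lt_of_lt_of_le hj1 hjd
    have hndpos : 0 < n / d := (Nat.one_le_div_iff hdpos).mpr (Nat.le_of_dvd (by omega) hdn)
    have hgcd : Nat.gcd (j / g * (n / d)) (n / g) = n / d := gcd_aux hdn hn0 hj1 hjd
    refine Sigma.ext ?_ (heq_of_eq ?_) <;> simp only [hgcd]
    · exact Nat.div_div_self hdn hn0
    · rw [Nat.mul_div_cancel _ hndpos, Nat.div_div_self hgn hn0, Nat.div_mul_cancel hgj]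
  · rintro ⟨d, k⟩ hp
    simp only [Finset.mem_sigma, Nat.mem_divisors, Finset.mem_filter, Finset.mem_Icc] at hp
    obtain ⟨⟨⟨hdn, -⟩, hndS⟩, hk1, hkd⟩ := hp
    set h := Nat.gcd k d with hh
    have hhd : h ∣ d := Nat.gcd_dvd_right k d
    have hhk : h ∣ k := Nat.gcd_dvd_left k d
    have hhn : h ∣ n := dvd_trans hhd hdn
    have hhpos : 0 < h := Nat.gcd_pos_of_pos_left d hk1
    have hdpos : 0 < d := lt_of_lt_of_le hk1 hkd
    have hndpos : 0 < n / d := (Nat.one_le_div_iff hdpos).mpr (Nat.le_of_dvd (by omega) hdn)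
    have hgcd : Nat.gcd (k / h * (n / d)) (n / h) = n / d := gcd_aux hdn hn0 hk1 hkd
    refine Sigma.ext ?_ (heq_of_eq ?_) <;> simp only [hgcd]
    · exact Nat.div_div_self hdn hn0
    · rw [Nat.mul_div_cancel _ hndpos, Nat.div_div_self hhn hn0, Nat.div_mul_cancel hhk]
  · rintro ⟨d, j⟩ hp
    simp only [Finset.mem_sigma, Nat.mem_divisors, Finset.mem_filter, Finset.mem_Icc] at hp
    obtain ⟨⟨hdn, -⟩, ⟨hj1, hjd⟩, hgS⟩ := hp
    set g := Nat.gcd j d with hg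
    have hgj : g ∣ j := Nat.gcd_dvd_left j d
    have hgn : g ∣ n := dvd_trans (Nat.gcd_dvd_right j d) hdn
    have hgpos : 0 < g := Nat.gcd_pos_of_pos_left d hj1
    have hdpos : 0 < d := lt_of_lt_of_le hj1 hjd
    have hd'pos : 0 < n / g := (Nat.one_le_div_iff hgpos).mpr (Nat.le_of_dvd (by omega) hgn)
    congr 1
    exact congrArg C (exp_eq_aux hdpos.ne' hd'pos.ne' (cross_aux hdn hgj))
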